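/- Let N be a nonempty nested set of C_m such that the union ⋃_{I ∈ N} I is connected in C_m. Then every non-identity element of the stabilizer (D_m)_N is a reflection; in particular (D_m)_N has order at most 2. -/

import Mathlib

open Pointwise

def cycleGraph (m : ℕ) : SimpleGraph (ZMod m) where
  Adj i j := i ≠ j ∧ (j = i + 1 ∨ i = j + 1)
  symm := ⟨fun i j h => ⟨h.1.symm, h.2.symm⟩⟩
  loopless := ⟨fun i h => h.1 rfl⟩

def IsConnSubset (m : ℕ) (I : Set (ZMod m)) : Prop :=
  ((cycleGraph m).induce I).Connected

def IsNested (m : ℕ) (N : Set (Set (ZMod m))) : Prop :=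
  N.Finite ∧
  (∀ I ∈ N, I.Nonempty ∧ I ≠ Set.univ ∧ IsConnSubset m I) ∧
  (∀ I ∈ N, ∀ J ∈ N, I ⊆ J ∨ J ⊆ I ∨ I ∩ J = ∅) ∧
  (∀ S : Finset (Set (ZMod m)), ↑S ⊆ N → 2 ≤ S.card →
    ((S : Set (Set (ZMod m))).Pairwise fun I J => I ∩ J = ∅) →
    ¬ IsConnSubset m (⋃ I ∈ S, I))

def rot (m : ℕ) : Equiv.Perm (ZMod m) := Equiv.addRight 1

def cycRefl (m : ℕ) : Equiv.Perm (ZMod m) := Equiv.neg (ZMod m)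

def dihedral (m : ℕ) : Subgroup (Equiv.Perm (ZMod m)) :=
  Subgroup.closure {rot m, cycRefl m}

def IsReflection (m : ℕ) (φ : Equiv.Perm (ZMod m)) : Prop :=
  φ ∈ dihedral m ∧ φ ∉ Subgroup.zpowers (rot m)

def nestedStab (m : ℕ) (N : Set (Set (ZMod m))) : Subgroup (Equiv.Perm (ZMod m)) :=
  dihedral m ⊓ MulAction.stabilizer (Equiv.Perm (ZMod m)) N

def rotStab (m : ℕ) (N : Set (Set (ZMod m))) : Subgroup (Equiv.Perm (ZMod m)) :=
  Subgroup.zpowers (rot m) ⊓ nestedStab m N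

noncomputable def alphaNum (m d k : ℕ) : ℕ :=
  {N : Set (Set (ZMod m)) | IsNested m N ∧ N.ncard = k ∧
    Nat.card (rotStab m N) = d ∧ ¬ ∃ φ ∈ nestedStab m N, IsReflection m φ}.ncard

noncomputable def betaNum (m d k : ℕ) : ℕ :=
  {N : Set (Set (ZMod m)) | IsNested m N ∧ N.ncard = k ∧
    Nat.card (rotStab m N) = d ∧ ∃ φ ∈ nestedStab m N, IsReflection m φ}.ncard

noncomputable def gammaNum (m d k : ℕ) : ℕ := alphaNum m d k + betaNum m d k

/- ## Auxiliary lemmas -/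

lemma rot_zpow (m : ℕ) (z : ℤ) : (rot m)^z = Equiv.addRight (z : ZMod m) := by
  rw [rot]
  induction z using Int.induction_on with
  | zero => ext x; simp
  | succ n ih =>
    rw [zpow_add_one, ih]; ext x
    simp [Equiv.Perm.mul_apply] <;> ring
  | pred n ih =>
    rw [zpow_sub_one, ih]; ext x
    simp [Equiv.Perm.mul_apply, Equiv.Perm.inv_def] <;> ring

lemma refl_sq (m : ℕ) : cycRefl m * cycRefl m = 1 := by
  ext x; simp [cycRefl]

lemma refl_cancel (m : ℕ) (c : Equiv.Perm (ZMod m)) :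
    cycRefl m * (cycRefl m * c) = c := by
  rw [← mul_assoc, refl_sq, one_mul]

lemma refl_inv (m : ℕ) : (cycRefl m)⁻¹ = cycRefl m :=
  inv_eq_of_mul_eq_one_left (refl_sq m)

lemma refl_conj_rot (m : ℕ) : cycRefl m * rot m * (cycRefl m)⁻¹ = (rot m)⁻¹ := by
  rw [refl_inv]; ext x
  simp [cycRefl, rot, Equiv.Perm.mul_apply]
  ring_nf

lemma conj_mem (m : ℕ) {u : Equiv.Perm (ZMod m)} (hu : u ∈ Subgroup.zpowers (rot m)) :
    cycRefl m * u * cycRefl m ∈ Subgroup.zpowers (rot m) := by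
  obtain ⟨z, rfl⟩ := hu
  have h : cycRefl m * (rot m) ^ z * cycRefl m = (cycRefl m * rot m * (cycRefl m)⁻¹) ^ z := by
    rw [conj_zpow, refl_inv]
  rw [h, refl_conj_rot]
  exact Subgroup.zpow_mem _ (Subgroup.inv_mem _ (Subgroup.mem_zpowers _)) z

lemma dihedral_cases (m : ℕ) {φ : Equiv.Perm (ZMod m)} (h : φ ∈ dihedral m) :
    φ ∈ Subgroup.zpowers (rot m) ∨ φ * cycRefl m ∈ Subgroup.zpowers (rot m) := by
  induction h using Subgroup.closure_induction with
  | mem x hx =>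
    rcases hx with rfl | rfl
    · exact Or.inl (Subgroup.mem_zpowers _)
    · right; rw [refl_sq]; exact Subgroup.one_mem _
  | one => exact Or.inl (Subgroup.one_mem _)
  | mul x y hx hy ihx ihy =>
    rcases ihx with hx' | hx' <;> rcases ihy with hy' | hy'
    · exact Or.inl (Subgroup.mul_mem _ hx' hy')
    · right; rw [mul_assoc]; exact Subgroup.mul_mem _ hx' hy'
    · right
      have h2 : x * y * cycRefl m = (x * cycRefl m) * (cycRefl m * y * cycRefl m) := by
        simp only [mul_assoc, refl_sq, refl_cancel, mul_one]
      rw [h2]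
      exact Subgroup.mul_mem _ hx' (conj_mem m hy')
    · left
      have h2 : x * y = (x * cycRefl m) * (cycRefl m * (y * cycRefl m) * cycRefl m) := by
        simp only [mul_assoc, refl_sq, refl_cancel, mul_one]
      rw [h2]
      exact Subgroup.mul_mem _ hx' (conj_mem m hy')
  | inv x hx ihx =>
    rcases ihx with hx' | hx'
    · exact Or.inl (Subgroup.inv_mem _ hx')
    · right
      have h2 : x⁻¹ * cycRefl m = cycRefl m * (x * cycRefl m)⁻¹ * cycRefl m := by
        rw [mul_inv_rev, refl_inv]
        simp only [mul_assoc, refl_sq, refl_cancel, mul_one]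
      rw [h2]
      exact conj_mem m (Subgroup.inv_mem _ hx')

lemma endpoint_unique (m : ℕ) {I : Set (ZMod m)} (hc : IsConnSubset m I)
    {a b : ZMod m} (ha : a ∈ I) (ha' : a - 1 ∉ I) (hb : b ∈ I) (hb' : b - 1 ∉ I) :
    a = b := by
  set P : I → Prop := fun x => ∃ n : ℕ, a + (n : ZMod m) = (x : ZMod m) ∧
    ∀ i : ℕ, i ≤ n → a + (i : ZMod m) ∈ I with hP
  have step : ∀ x y : I, ((cycleGraph m).induce I).Adj x y → P x → P y := by
    rintro x y hadj ⟨n, hn, hall⟩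
    obtain ⟨hne, hxy⟩ : ((x:ZMod m) ≠ (y:ZMod m)) ∧
        ((y:ZMod m) = (x:ZMod m) + 1 ∨ (x:ZMod m) = (y:ZMod m) + 1) := hadj
    rcases hxy with h1 | h1
    · refine ⟨n + 1, ?_, ?_⟩
      · push_cast; rw [← add_assoc, hn, h1]
      · intro i hi
        rcases Nat.lt_or_ge i (n+1) with h | h
        · exact hall i (Nat.lt_succ_iff.mp h)
        · have hie : i = n + 1 := le_antisymm hi h
          subst hie
          have h2 : a + ((n:ℕ) + 1 : ZMod m) = (y : ZMod m) := by rw [← add_assoc, hn, h1]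
          push_cast
          rw [h2]; exact y.2
    · rcases n with _ | k
      · exfalso
        apply ha'
        have hy : (y : ZMod m) = a - 1 := by
          push_cast at hn
          rw [add_zero] at hn
          rw [← hn] at h1
          linear_combination -h1
        rw [← hy]; exact y.2
      · refine ⟨k, ?_, fun i hi => hall i (Nat.le_succ_of_le hi)⟩
        have hk : a + ((k:ℕ) + 1 : ZMod m) = (x : ZMod m) := by push_cast at hn ⊢; exact hn
        have h2 : a + (k : ZMod m) + 1 = (y : ZMod m) + 1 := by
          rw [add_assoc, hk, h1]
        exact add_right_cancel h2
  have key : ∀ (u v : I) (w : ((cycleGraph m).induce I).Walk u v), P u → P v := by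
    intro u v w
    induction w with
    | nil => exact id
    | cons h p ih => exact fun hu => ih (step _ _ h hu)
  have base : P ⟨a, ha⟩ := ⟨0, by push_cast; ring, fun i hi => by
    interval_cases i; simpa using ha⟩
  obtain ⟨w⟩ := hc.1 ⟨a, ha⟩ ⟨b, hb⟩
  obtain ⟨n, hn, hall⟩ := key _ _ w base
  rcases n with _ | k
  · simpa using hn
  · exfalso
    apply hb'
    have h3 := hall k (Nat.le_succ k)
    have hkb : a + (k : ZMod m) = b - 1 := by
      have h4 : a + ((k:ℕ) + 1 : ZMod m) = b := by push_cast at hn ⊢; exact hn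
      linear_combination h4
    rwa [hkb] at h3

lemma endpoint_exists (m : ℕ) [NeZero m] {U : Set (ZMod m)}
    (hne : U.Nonempty) (hproper : U ≠ Set.univ) : ∃ a ∈ U, a - 1 ∉ U := by
  obtain ⟨y, hy⟩ := hne
  obtain ⟨x, hx⟩ : ∃ x, x ∉ U := by
    by_contra h
    push_neg at h
    exact hproper (Set.eq_univ_of_forall h)
  have hex : ∃ j : ℕ, 1 ≤ j ∧ x + (j : ZMod m) ∈ U := by
    refine ⟨(y - x).val, ?_, ?_⟩
    · rcases Nat.eq_zero_or_pos (y - x).val with h | h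
      · exfalso
        rw [ZMod.val_eq_zero, sub_eq_zero] at h
        exact hx (h ▸ hy)
      · exact h
    · rw [ZMod.natCast_val, ZMod.cast_id]
      simpa using hy
  classical
  let j₀ := Nat.find hex
  obtain ⟨hj1, hjU⟩ : 1 ≤ j₀ ∧ x + (j₀ : ZMod m) ∈ U := Nat.find_spec hex
  refine ⟨x + (j₀ : ZMod m), hjU, ?_⟩
  rcases eq_or_lt_of_le hj1 with h | h
  · have h2 : x + (j₀ : ZMod m) - 1 = x := by rw [← h]; push_cast; ring
    rw [h2]; exact hx
  · have hmin := Nat.find_min hex (show j₀ - 1 < j₀ by omega)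
    intro hmem
    apply hmin
    refine ⟨by omega, ?_⟩
    have h2 : ((j₀ - 1 : ℕ) : ZMod m) = (j₀ : ZMod m) - 1 := by
      push_cast [Nat.cast_sub hj1]; ring
    rw [h2, ← add_sub_assoc]
    exact hmem

lemma rot_fix (m : ℕ) [NeZero m] {U : Set (ZMod m)} (hc : IsConnSubset m U)
    (hne : U.Nonempty) (hproper : U ≠ Set.univ) {φ : Equiv.Perm (ZMod m)}
    (hφ : φ ∈ Subgroup.zpowers (rot m)) (hfix : φ • U = U) : φ = 1 := by
  obtain ⟨z, hz⟩ := hφ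
  simp only at hz
  rw [rot_zpow] at hz
  set c : ZMod m := (z : ZMod m) with hcdef
  obtain ⟨a, haU, haU'⟩ := endpoint_exists m hne hproper
  have hmem : ∀ x : ZMod m, x ∈ U ↔ x + c ∈ U := by
    intro x
    constructor
    · intro hx
      rw [← hfix]
      exact ⟨x, hx, by rw [← hz]; rfl⟩
    · intro hx
      rw [← hfix] at hx
      obtain ⟨u, hu, hux⟩ := hx
      rw [← hz] at hux
      have h2 : u + c = x + c := hux
      have h3 : u = x := by linear_combination h2
      exact h3 ▸ hu
  have h1 : a + c ∈ U := (hmem a).mp haU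
  have h2 : a + c - 1 ∉ U := by
    intro h
    apply haU'
    have h3 : (a - 1) + c = a + c - 1 := by ring
    exact (hmem (a - 1)).mpr (h3 ▸ h)
  have h4 := endpoint_unique m hc haU haU' h1 h2
  have hc0 : c = 0 := by linear_combination -h4
  rw [← hz, hc0]
  exact Equiv.addRight_zero

lemma sUnion_mem (m : ℕ) {N : Set (Set (ZMod m))} (hN : IsNested m N)
    (hne : N.Nonempty) (hconn : IsConnSubset m (⋃₀ N)) : ⋃₀ N ∈ N := by
  classical
  obtain ⟨hfin, _hprops, hN2, hN3⟩ := hN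
  have hmax : ∀ I ∈ N, ∃ K, (K ∈ N ∧ ∀ J ∈ N, K ⊆ J → K = J) ∧ I ⊆ K := by
    intro I hI
    obtain ⟨K, ⟨hKN, hIK⟩, hKmax⟩ :=
      Set.Finite.exists_maximalFor id {J ∈ N | I ⊆ J}
        (hfin.subset (Set.sep_subset _ _)) ⟨I, hI, subset_rfl⟩
    exact ⟨K, ⟨hKN, fun J hJ hKJ => le_antisymm hKJ (hKmax ⟨hJ, hIK.trans hKJ⟩ hKJ)⟩, hIK⟩
  suffices h : ∃ I₀ ∈ N, ∀ J ∈ N, J ⊆ I₀ by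
    obtain ⟨I₀, hI₀, hall⟩ := h
    have h2 : ⋃₀ N = I₀ :=
      subset_antisymm (Set.sUnion_subset hall) (Set.subset_sUnion_of_mem hI₀)
    rw [h2]; exact hI₀
  by_contra hnot
  push_neg at hnot
  obtain ⟨I, hI⟩ := hne
  obtain ⟨K, ⟨hKN, hKmax⟩, _⟩ := hmax I hI
  obtain ⟨J, hJN, hJK⟩ := hnot K hKN
  obtain ⟨K', ⟨hK'N, hK'max⟩, hJK'⟩ := hmax J hJN
  have hKK' : K ≠ K' := fun h => hJK (h ▸ hJK')
  set M : Set (Set (ZMod m)) := {I ∈ N | ∀ J ∈ N, I ⊆ J → I = J} with hM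
  have hMfin : M.Finite := hfin.subset (Set.sep_subset _ _)
  set S : Finset (Set (ZMod m)) := hMfin.toFinset with hS
  have hSN : ↑S ⊆ N := by
    intro A hA
    rw [Set.Finite.coe_toFinset] at hA
    exact hA.1
  have hKS : K ∈ S := by rw [hS, Set.Finite.mem_toFinset]; exact ⟨hKN, hKmax⟩
  have hK'S : K' ∈ S := by rw [hS, Set.Finite.mem_toFinset]; exact ⟨hK'N, hK'max⟩
  have hcard : 2 ≤ S.card := Finset.one_lt_card.mpr ⟨K, hKS, K', hK'S, hKK'⟩
  have hpw : (S : Set (Set (ZMod m))).Pairwise fun I J => I ∩ J = ∅ := by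
    intro A hA B hB hAB
    rw [Finset.mem_coe, hS, Set.Finite.mem_toFinset] at hA hB
    rcases hN2 A hA.1 B hB.1 with h | h | h
    · exact absurd (hA.2 B hB.1 h) hAB
    · exact absurd (hB.2 A hA.1 h).symm hAB
    · exact h
  have hU : (⋃ I ∈ S, I) = ⋃₀ N := by
    apply subset_antisymm
    · exact Set.iUnion₂_subset fun A hA => Set.subset_sUnion_of_mem (hSN hA)
    · intro z hz
      obtain ⟨A, hA, hzA⟩ := hz
      obtain ⟨KA, ⟨hKAN, hKAmax⟩, hAKA⟩ := hmax A hA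
      have hKAS : KA ∈ S := by rw [hS, Set.Finite.mem_toFinset]; exact ⟨hKAN, hKAmax⟩
      exact Set.mem_biUnion hKAS (hAKA hzA)
  exact hN3 S hSN hcard hpw (hU ▸ hconn)

theorem connected_union_stab_small (m : ℕ) (hm : 3 ≤ m) (N : Set (Set (ZMod m)))
    (hN : IsNested m N) (hne : N.Nonempty)
    (hconn : IsConnSubset m (⋃₀ N)) :
    (∀ φ ∈ nestedStab m N, φ ≠ 1 → IsReflection m φ) ∧
    Nat.card (nestedStab m N) ≤ 2 := by
  haveI : NeZero m := ⟨by omega⟩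
  classical
  set U : Set (ZMod m) := ⋃₀ N with hUdef
  have hUN : U ∈ N := sUnion_mem m hN hne hconn
  obtain ⟨hUne, hUproper, _⟩ := hN.2.1 U hUN
  -- any rotation in the stabilizer is trivial
  have key : ∀ φ ∈ nestedStab m N, φ ∈ Subgroup.zpowers (rot m) → φ = 1 := by
    intro φ hφ hrot
    have hstab : φ • N = N := hφ.2
    have hfix : φ • U = U := by
      apply subset_antisymm
      · rintro x ⟨u, hu, rfl⟩
        obtain ⟨A, hA, huA⟩ := hu
        have : φ • A ∈ N := by rw [← hstab]; exact Set.smul_mem_smul_set hA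
        exact Set.mem_sUnion.mpr ⟨φ • A, this, Set.smul_mem_smul_set huA⟩
      · intro x hx
        obtain ⟨A, hA, hxA⟩ := hx
        have hA' : A ∈ φ • N := by rw [hstab]; exact hA
        obtain ⟨B, hB, rfl⟩ := hA'
        obtain ⟨b, hb, rfl⟩ := hxA
        exact Set.smul_mem_smul_set (Set.mem_sUnion.mpr ⟨B, hB, hb⟩)
    exact rot_fix m hconn hUne hUproper hrot hfix
  have uniq : ∀ φ ∈ nestedStab m N, ∀ ψ ∈ nestedStab m N,
      φ ∉ Subgroup.zpowers (rot m) → ψ ∉ Subgroup.zpowers (rot m) → φ = ψ := by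
    intro φ hφ ψ hψ hφr hψr
    rcases dihedral_cases m hφ.1 with h | hφ2
    · exact absurd h hφr
    rcases dihedral_cases m hψ.1 with h | hψ2
    · exact absurd h hψr
    have hprod : φ * ψ⁻¹ ∈ Subgroup.zpowers (rot m) := by
      have h2 : φ * ψ⁻¹ = (φ * cycRefl m) * (ψ * cycRefl m)⁻¹ := by
        rw [mul_inv_rev, refl_inv]
        simp only [mul_assoc, refl_sq, refl_cancel, mul_one]
      rw [h2]
      exact Subgroup.mul_mem _ hφ2 (Subgroup.inv_mem _ hψ2)
    have hmem : φ * ψ⁻¹ ∈ nestedStab m N :=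
      Subgroup.mul_mem _ hφ (Subgroup.inv_mem _ hψ)
    have h1 : φ * ψ⁻¹ = 1 := key _ hmem hprod
    exact mul_inv_eq_one.mp h1
  constructor
  · intro φ hφ hφ1
    exact ⟨hφ.1, fun h => hφ1 (key φ hφ h)⟩
  · by_cases hex : ∃ φ₀ ∈ nestedStab m N, φ₀ ≠ 1
    · obtain ⟨φ₀, hφ₀, hφ₀1⟩ := hex
      have hsub : (nestedStab m N : Set (Equiv.Perm (ZMod m))) ⊆ {1, φ₀} := by
        intro ψ hψ
        by_cases hψ1 : ψ = 1
        · exact Or.inl hψ1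
        · right
          exact uniq ψ hψ φ₀ hφ₀
            (fun h => hψ1 (key ψ hψ h)) (fun h => hφ₀1 (key φ₀ hφ₀ h))
      calc Nat.card (nestedStab m N)
          = (nestedStab m N : Set (Equiv.Perm (ZMod m))).ncard := by
            rw [← Nat.card_coe_set_eq]; rfl
        _ ≤ ({1, φ₀} : Set (Equiv.Perm (ZMod m))).ncard :=
            Set.ncard_le_ncard hsub ((Set.finite_singleton φ₀).insert 1)
        _ ≤ 2 := by
            refine le_trans (Set.ncard_insert_le _ _) ?_
            rw [Set.ncard_singleton]
    · push_neg at hex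
      have hsub : (nestedStab m N : Set (Equiv.Perm (ZMod m))) ⊆ {1} :=
        fun ψ hψ => hex ψ hψ
      calc Nat.card (nestedStab m N)
          = (nestedStab m N : Set (Equiv.Perm (ZMod m))).ncard := by
            rw [← Nat.card_coe_set_eq]; rfl
        _ ≤ ({1} : Set (Equiv.Perm (ZMod m))).ncard :=
            Set.ncard_le_ncard hsub (Set.finite_singleton 1)
        _ ≤ 2 := by rw [Set.ncard_singleton]; omega
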